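/- With n = 2: for every integer k ≥ 0 and every ℓ ∈ ℕ, the identity (r+k, ℓ) = Σ_{s=1}^{r} (−1)^{s−1} [s+k−1 ¦ s−1] · [r+k ¦ r−s] · (r−s, ℓ+s+k) holds in V_2, i.e. the difference of the two sides lies in R_2. -/

import Mathlib

noncomputable section

open Finset

/-- The field `ℚ(q)` of rational functions. -/
abbrev K : Type := RatFunc ℚ

/-- The variable `q`. -/
def q : K := RatFunc.X

/-- The balanced `q`-integer `[n] = (q^n - q^{-n})/(q - q^{-1})`. -/
def qint (n : ℤ) : K := (q ^ n - q ^ (-n)) / (q - q⁻¹)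

/-- The `q`-factorial `[m]! = [1][2]⋯[m]`. -/
def qfact (m : ℕ) : K := ∏ t ∈ Finset.range m, qint (t + 1)

/-- The `q`-binomial coefficient `[n ¦ m] = [n][n-1]⋯[n-m+1]/[m]!`. -/
def qbinom (n : ℤ) (m : ℕ) : K := (∏ t ∈ Finset.range m, qint (n - t)) / qfact m

/-- The tuple `a(i,j)` obtained from `a` by replacing the pair of entries at the
(0-based) positions `i, i+1` by `(a_i − j, a_{i+1} + j)`. -/
def tupleRepl {n : ℕ} (a : Fin n → ℕ) (i : ℕ) (h : i + 1 < n) (j : ℕ) : Fin n → ℕ :=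
  fun t =>
    if t = (⟨i, by omega⟩ : Fin n) then a ⟨i, by omega⟩ - j
    else if t = (⟨i + 1, h⟩ : Fin n) then a ⟨i + 1, h⟩ + j
    else a t

/-- The set of spanning elements of the subspace `R_n` of relations:
`Σ_{j=0}^{r} (−1)^j [r ¦ j] · a(i,j)` for `a ∈ ℕ^n` and a position `i` with `a_i ≥ r`. -/
def relSet (r n : ℕ) : Set ((Fin n → ℕ) →₀ K) :=
  { x | ∃ (a : Fin n → ℕ) (i : ℕ) (h : i + 1 < n), r ≤ a ⟨i, by omega⟩ ∧
      x = ∑ j ∈ Finset.range (r + 1),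
            ((-1 : K) ^ j * qbinom (r : ℤ) j) • Finsupp.single (tupleRepl a i h j) (1 : K) }

open Polynomial
lemma q_pow_ne_one (m : ℕ) (h : 1 ≤ m) : (q:K)^m ≠ 1 := by
  unfold q
  rw [← RatFunc.algebraMap_X, ← map_pow, ← map_one (algebraMap ℚ[X] (RatFunc ℚ))]
  intro hx
  have h2 := RatFunc.algebraMap_injective ℚ hx
  have h3 := congrArg (Polynomial.eval 2) h2
  simp at h3
  have h4 : (1:ℚ) < 2 ^ m := one_lt_pow₀ (by norm_num) (by omega)
  rw [h3] at h4; norm_num at h4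
lemma hq0 : (q:K) ≠ 0 := RatFunc.X_ne_zero
lemma pow_sub_inv_ne_zero (n : ℕ) (h : 1 ≤ n) : (q:K)^n - ((q:K)^n)⁻¹ ≠ 0 := by
  intro hx
  have h1 : (q:K)^n * ((q:K)^n - ((q:K)^n)⁻¹) = 0 := by rw [hx, mul_zero]
  rw [mul_sub, mul_inv_cancel₀ (pow_ne_zero n hq0), ← pow_add] at h1
  exact q_pow_ne_one (n+n) (by omega) (sub_eq_zero.mp h1)
lemma hd0 : q - q⁻¹ ≠ 0 := by
  have := pow_sub_inv_ne_zero 1 le_rfl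
  simpa using this
lemma qint_nat (n : ℕ) : qint n = (q^n - ((q:K)^n)⁻¹) / (q - q⁻¹) := by
  unfold qint
  rw [zpow_neg, zpow_natCast]
lemma qint_ne_zero (n : ℕ) (h : 1 ≤ n) : qint n ≠ 0 := by
  rw [qint_nat]
  exact div_ne_zero (pow_sub_inv_ne_zero n h) hd0
lemma qfact_succ (m : ℕ) : qfact (m+1) = qfact m * qint (m+1) := by
  unfold qfact
  rw [Finset.prod_range_succ]
lemma qfact_ne_zero (m : ℕ) : qfact m ≠ 0 := by
  unfold qfact
  exact Finset.prod_ne_zero_iff.mpr (fun t _ => by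
    have := qint_ne_zero (t+1) (by omega)
    simpa using this)
lemma qint_core (x y z : ℕ) :
    qint x * qint z + qint y * qint (x+y+z) = qint (y+z) * qint (x+y) := by
  have hx := pow_ne_zero x hq0
  have hy := pow_ne_zero y hq0
  have hz := pow_ne_zero z hq0
  have e1 : ((x:ℤ)+y+z) = ((x+y+z : ℕ) : ℤ) := by push_cast; ring
  have e2 : ((y:ℤ)+z) = ((y+z : ℕ) : ℤ) := by push_cast; ring
  have e3 : ((x:ℤ)+y) = ((x+y : ℕ) : ℤ) := by push_cast; ring
  rw [e1, e2, e3, qint_nat, qint_nat, qint_nat, qint_nat (x+y+z), qint_nat (y+z), qint_nat (x+y)]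
  rw [div_mul_div_comm, div_mul_div_comm, div_mul_div_comm, ← add_div]
  congr 1
  simp only [pow_add]
  generalize (q:K)^x = A at hx ⊢
  generalize (q:K)^y = B at hy ⊢
  generalize (q:K)^z = C at hz ⊢
  simp only [mul_inv]
  have hb : B * B⁻¹ = 1 := mul_inv_cancel₀ hy
  linear_combination ((C - C⁻¹) * (A⁻¹ - A)) * hb

lemma qbinom_zero (n : ℤ) : qbinom n 0 = 1 := by
  unfold qbinom qfact
  simp

lemma prod_qint (n m : ℕ) (h : m ≤ n) :
    (∏ t ∈ Finset.range m, qint ((n:ℤ) - t)) * qfact (n-m) = qfact n := by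
  induction m with
  | zero => simp
  | succ m ih =>
      have hm : m ≤ n := by omega
      rw [Finset.prod_range_succ]
      have e1 : n - m = (n - (m+1)) + 1 := by omega
      have e2 : qfact (n - m) = qfact (n - (m+1)) * qint (n - m) := by
        rw [e1, qfact_succ]
        congr 1
        push_cast [Nat.cast_sub (show m+1 ≤ n from h)]
        ring
      have e3 : ((n:ℤ) - m) = ((n - m : ℕ) : ℤ) := by push_cast [Nat.cast_sub hm]; ring
      calc (∏ t ∈ Finset.range m, qint ((n:ℤ) - t)) * qint ((n:ℤ) - m) * qfact (n-(m+1))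
          = (∏ t ∈ Finset.range m, qint ((n:ℤ) - t)) * (qfact (n-(m+1)) * qint ((n-m:ℕ))) := by
            rw [e3]; ring
        _ = (∏ t ∈ Finset.range m, qint ((n:ℤ) - t)) * qfact (n - m) := by rw [e2, e3]
        _ = qfact n := ih hm

lemma qbinom_fac (n m : ℕ) (h : m ≤ n) :
    qbinom n m = qfact n / (qfact m * qfact (n-m)) := by
  unfold qbinom
  rw [← prod_qint n m h]
  rw [eq_div_iff (by exact mul_ne_zero (qfact_ne_zero m) (qfact_ne_zero (n-m)))]
  field_simp [qfact_ne_zero m]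

lemma qbinom_self (n : ℕ) : qbinom n n = 1 := by
  rw [qbinom_fac n n le_rfl]
  simp [qfact]
  exact qfact_ne_zero n

lemma qbinom_symm (n m : ℕ) (h : m ≤ n) : qbinom n m = qbinom n (n-m) := by
  rw [qbinom_fac n m h, qbinom_fac n (n-m) (by omega), show n - (n-m) = m by omega, mul_comm]

lemma qfact_succ' (m : ℕ) : qfact (m+1) = qfact m * qint ((m+1 : ℕ)) := by
  rw [qfact_succ]; norm_cast

lemma qaux (α κ υ μ ρ σ W : K) (hα : α ≠ 0) (hκ : κ ≠ 0) (hυ : υ ≠ 0) (hμ : μ ≠ 0)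
    (h : κ*υ + α*σ = ρ*μ) : W/(α*μ) + W*σ/(κ*μ*υ) = ρ*W/(α*υ*κ) := by
  rw [div_add_div _ _ (mul_ne_zero hα hμ) (mul_ne_zero (mul_ne_zero hκ hμ) hυ),
    div_eq_div_iff (mul_ne_zero (mul_ne_zero hα hμ) (mul_ne_zero (mul_ne_zero hκ hμ) hυ))
      (mul_ne_zero (mul_ne_zero hα hυ) hκ)]
  linear_combination (W * μ * α * υ * κ) * h

lemma qJ (a u k : ℕ) :
    qbinom ((a+1+k : ℕ)) (a+1) * qbinom ((a+2+u+k : ℕ)) (a+1+k+1)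
      + qbinom ((a+1+k : ℕ)) a * qbinom ((a+2+u+k+1 : ℕ)) (a+1+k+1)
    = qbinom ((a+2+u : ℕ)) (a+1) * qbinom ((a+2+u+k : ℕ)) (k+1) := by
  rw [show ((a+2+u : ℕ) : ℤ) = ((a+1+u+1 : ℕ) : ℤ) from by omega]
  rw [qbinom_fac (a+1+k) (a+1) (by omega), qbinom_fac (a+2+u+k) (a+1+k+1) (by omega),
      qbinom_fac (a+1+k) a (by omega), qbinom_fac (a+2+u+k+1) (a+1+k+1) (by omega),
      qbinom_fac (a+1+u+1) (a+1) (by omega), qbinom_fac (a+2+u+k) (k+1) (by omega)]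
  rw [show a+1+k-(a+1) = k from by omega, show a+2+u+k-(a+1+k+1) = u from by omega,
      show a+1+k-a = k+1 from by omega, show a+2+u+k+1-(a+1+k+1) = u+1 from by omega,
      show a+1+u+1-(a+1) = u+1 from by omega, show a+2+u+k-(k+1) = a+1+u from by omega]
  rw [qfact_succ' (a+1+k), qfact_succ' (a+1+u), qfact_succ' (a+2+u+k),
      qfact_succ' a, qfact_succ' k, qfact_succ' u]
  have hcore := qint_core (k+1) (a+1) (u+1)
  have n1 : qint ((a+1 : ℕ)) ≠ 0 := qint_ne_zero _ (by omega)
  have n2 : qint ((k+1 : ℕ)) ≠ 0 := qint_ne_zero _ (by omega)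
  have n3 : qint ((u+1 : ℕ)) ≠ 0 := qint_ne_zero _ (by omega)
  have n4 : qint ((a+1+k+1 : ℕ)) ≠ 0 := qint_ne_zero _ (by omega)
  have m1 := qfact_ne_zero a
  have m2 := qfact_ne_zero k
  have m3 := qfact_ne_zero u
  have m4 := qfact_ne_zero (a+1+k)
  have m5 := qfact_ne_zero (a+1+u)
  push_cast at n1 n2 n3 n4 hcore ⊢
  rw [show ((k:ℤ)+1+((a:ℤ)+1)+((u:ℤ)+1)) = (a:ℤ)+2+(u:ℤ)+(k:ℤ)+1 from by ring,
      show ((a:ℤ)+1+((u:ℤ)+1)) = (a:ℤ)+1+(u:ℤ)+1 from by ring,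
      show ((k:ℤ)+1+((a:ℤ)+1)) = (a:ℤ)+1+(k:ℤ)+1 from by ring] at hcore
  rw [div_mul_div_comm, div_mul_div_comm, div_mul_div_comm]
  rw [div_add_div _ _ (by (repeat' apply mul_ne_zero) <;> assumption)
        (by (repeat' apply mul_ne_zero) <;> assumption),
      div_eq_div_iff (by (repeat' apply mul_ne_zero) <;> assumption)
        (by (repeat' apply mul_ne_zero) <;> assumption)]
  linear_combination (qfact (a+1+k)^2 * qfact (a+2+u+k) * qfact a^2 * qfact k^2
      * qint ((k:ℤ)+1) * qint ((a:ℤ)+1+(k:ℤ)+1) * qfact u^2 * qint ((u:ℤ)+1)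
      * qint ((a:ℤ)+1) * qfact (a+1+u)) * hcore

/-- `c_m = [r+m-1 ¦ m]`. -/
def cc (r m : ℕ) : K := qbinom ((r+m-1 : ℕ)) m

lemma CL (r : ℕ) (s : ℕ) (hs : 1 ≤ s) : ∀ t, s ≤ r → s ≤ t →
    ∑ j ∈ Finset.range s, cc r (t-j) * ((-1:K)^j * qbinom (r:ℕ) j)
    = (-1:K)^(s-1) * qbinom ((t-1 : ℕ)) (s-1) * qbinom ((r+t-s : ℕ)) t := by
  induction s, hs using Nat.le_induction with
  | base =>
    intro t hr ht
    rw [Finset.sum_range_one]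
    norm_num [cc, qbinom_zero]
  | succ s hs1 ih =>
    intro t hr ht
    rw [Finset.sum_range_succ, ih t (by omega) (by omega)]
    obtain ⟨a, rfl⟩ : ∃ a, s = a+1 := ⟨s-1, by omega⟩
    obtain ⟨u, rfl⟩ : ∃ u, r = a+2+u := ⟨r-(a+2), by omega⟩
    obtain ⟨k2, rfl⟩ : ∃ k2, t = a+2+k2 := ⟨t-(a+2), by omega⟩
    simp only [cc]
    rw [show ((a+2+k2-1 : ℕ) : ℤ) = ((a+1+k2 : ℕ) : ℤ) from by omega,
        show ((a+2+u+(a+2+k2)-(a+1) : ℕ) : ℤ) = ((a+2+u+k2+1 : ℕ) : ℤ) from by omega,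
        show ((a+2+u+(a+2+k2)-(a+1+1) : ℕ) : ℤ) = ((a+2+u+k2 : ℕ) : ℤ) from by omega,
        show a+2+k2-(a+1) = k2+1 from by omega]
    rw [show ((a+2+u+(k2+1)-1 : ℕ) : ℤ) = ((a+2+u+k2 : ℕ) : ℤ) from by omega]
    rw [show a+1+1-1 = a+1 from by omega, show a+1-1 = a from by omega,
        show a+2+k2 = a+1+k2+1 from by omega]
    linear_combination (-(-1:K)^(a+1)) * qJ a u k2

lemma FS (r t : ℕ) (hr : 1 ≤ r) (ht : 1 ≤ t) :
    ∑ j ∈ Finset.range (min t r + 1), cc r (t-j) * ((-1:K)^j * qbinom (r:ℕ) j) = 0 := by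
  rcases le_or_gt t r with h | h
  · rw [min_eq_left h, Finset.sum_range_succ, CL r t ht t h le_rfl]
    rw [Nat.sub_self]
    obtain ⟨b, rfl⟩ : ∃ b, t = b+1 := ⟨t-1, by omega⟩
    rw [show b+1-1 = b from by omega, qbinom_self b, show r+(b+1)-(b+1) = r from by omega]
    simp only [cc]
    rw [show ((r+0-1 : ℕ) : ℤ) = ((r-1 : ℕ) : ℤ) from by omega, qbinom_zero]
    ring
  · rw [min_eq_right (by omega : r ≤ t), Finset.sum_range_succ,
        CL r r hr t le_rfl (by omega), qbinom_self r]
    simp only [cc]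
    rw [show ((r+(t-r)-1 : ℕ) : ℤ) = ((t-1 : ℕ) : ℤ) from by omega,
        show r+t-r = t from by omega, qbinom_self t]
    rw [qbinom_symm (t-1) (r-1) (by omega), show t-1-(r-1) = t-r from by omega]
    obtain ⟨b, rfl⟩ : ∃ b, r = b+1 := ⟨r-1, by omega⟩
    rw [show b+1-1 = b from by omega]
    ring

def uu (r k l : ℕ) (t : ℕ) : (Fin 2 → ℕ) →₀ K :=
  Finsupp.single (![r+k-t, l+t] : Fin 2 → ℕ) (1:K)

def EE (r k : ℕ) (t : ℕ) : K :=
  ∑ j ∈ Finset.range (r+1),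
    if j ≤ t ∧ t ≤ k + j then cc r (t-j) * ((-1:K)^j * qbinom (r:ℕ) j) else 0

lemma EE_zero (r k : ℕ) : EE r k 0 = 1 := by
  rw [EE, Finset.sum_eq_single 0]
  · norm_num [cc, qbinom_zero]
  · intro j _ hj0; rw [if_neg]; omega
  · intro h0; exact absurd (Finset.mem_range.mpr (by omega)) h0

lemma EE_mid (r k t : ℕ) (hr : 1 ≤ r) (h1 : 1 ≤ t) (h2 : t ≤ k) : EE r k t = 0 := by
  rw [EE]
  have hf : (Finset.range (r+1)).filter (fun j => j ≤ t ∧ t ≤ k + j)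
      = Finset.range (min t r + 1) := by
    ext j; simp only [Finset.mem_filter, Finset.mem_range]; omega
  rw [← Finset.sum_filter, hf]
  exact FS r t hr h1

lemma EE_tail (r : ℕ) (hr : 2 ≤ r) (k s : ℕ) (h1 : 1 ≤ s) (h2 : s ≤ r) :
    EE r k (k+s) = -((-1:K)^(s-1) * qbinom ((s:ℤ)+(k:ℤ)-1) (s-1)
      * qbinom ((r:ℤ)+(k:ℤ)) (r-s)) := by
  rw [EE]
  have hf : (Finset.range (r+1)).filter (fun j => j ≤ k+s ∧ k+s ≤ k + j)
      = Finset.Ico s (min (k+s) r + 1) := by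
    ext j; simp only [Finset.mem_filter, Finset.mem_range, Finset.mem_Ico]; omega
  rw [← Finset.sum_filter, hf, Finset.sum_Ico_eq_sub _ (by omega : s ≤ min (k+s) r + 1)]
  rw [FS r (k+s) (by omega) (by omega), CL r s h1 (k+s) h2 (by omega), zero_sub]
  rw [show ((k+s-1 : ℕ) : ℤ) = (s:ℤ)+(k:ℤ)-1 from by omega,
      show ((r+(k+s)-s : ℕ) : ℤ) = ((r+k : ℕ) : ℤ) from by omega]
  rw [qbinom_symm (r+k) (k+s) (by omega), show r+k-(k+s) = r-s from by omega]
  rw [show ((r+k : ℕ) : ℤ) = (r:ℤ)+(k:ℤ) from by push_cast; ring]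

/-- n = 2: for every `k ≥ 0` and `ℓ ∈ ℕ`,
`(r+k, ℓ) = Σ_{s=1}^{r} (−1)^{s−1} [s+k−1 ¦ s−1] [r+k ¦ r−s] (r−s, ℓ+s+k)` holds in `V_2`,
i.e. the difference of the two sides lies in `R_2`. -/

theorem stmt8 (r : ℕ) (hr : 2 ≤ r) (k l : ℕ) :
    Finsupp.single (![r + k, l] : Fin 2 → ℕ) (1 : K)
      - ∑ s ∈ Finset.Icc 1 r,
          ((-1 : K) ^ (s - 1) * qbinom ((s : ℤ) + (k : ℤ) - 1) (s - 1) *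
            qbinom ((r : ℤ) + (k : ℤ)) (r - s)) •
          Finsupp.single (![r - s, l + s + k] : Fin 2 → ℕ) (1 : K)
      ∈ Submodule.span K (relSet r 2) := by
  have h02 : (0:ℕ)+1 < 2 := by norm_num
  have hr1 : 1 ≤ r := by omega
  have hrepl : ∀ (x y j : ℕ), tupleRepl ![x, y] 0 h02 j = ![x - j, y + j] := by
    intro x y j
    funext t
    fin_cases t <;> simp [tupleRepl]
  have key : ∑ m ∈ Finset.range (k+1), cc r m •
        (∑ j ∈ Finset.range (r+1), ((-1:K)^j * qbinom (r:ℤ) j) •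
          Finsupp.single (tupleRepl ![r+k-m, l+m] 0 h02 j) (1:K))
      = Finsupp.single (![r + k, l] : Fin 2 → ℕ) (1 : K)
        - ∑ s ∈ Finset.Icc 1 r, (((-1:K)^(s-1) * qbinom ((s:ℤ)+(k:ℤ)-1) (s-1) *
            qbinom ((r:ℤ)+(k:ℤ)) (r-s)) •
            Finsupp.single (![r-s, l+s+k] : Fin 2 → ℕ) (1:K)) := by
    have step1 : ∀ m ∈ Finset.range (k+1), cc r m •
        (∑ j ∈ Finset.range (r+1), ((-1:K)^j * qbinom (r:ℤ) j) •
          Finsupp.single (tupleRepl ![r+k-m, l+m] 0 h02 j) (1:K))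
        = ∑ j ∈ Finset.range (r+1),
            (cc r m * ((-1:K)^j * qbinom (r:ℕ) j)) • uu r k l (m+j) := by
      intro m _
      rw [Finset.smul_sum]
      refine Finset.sum_congr rfl fun j _ => ?_
      rw [smul_smul, hrepl]
      unfold uu
      rw [show r+k-m-j = r+k-(m+j) from by omega, show l+m+j = l+(m+j) from by omega]
    rw [Finset.sum_congr rfl step1]
    have step2 : ∑ m ∈ Finset.range (k+1), ∑ j ∈ Finset.range (r+1),
          (cc r m * ((-1:K)^j * qbinom (r:ℕ) j)) • uu r k l (m+j)
        = ∑ t ∈ Finset.range (k+r+1), EE r k t • uu r k l t := by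
      rw [Finset.sum_comm]
      have inner : ∀ j ∈ Finset.range (r+1),
          ∑ m ∈ Finset.range (k+1), (cc r m * ((-1:K)^j * qbinom (r:ℕ) j)) • uu r k l (m+j)
          = ∑ t ∈ Finset.range (k+r+1),
              (if j ≤ t ∧ t ≤ k + j then cc r (t-j) * ((-1:K)^j * qbinom (r:ℕ) j) else 0)
                • uu r k l t := by
        intro j hj
        have hj' : j ≤ r := by simpa [Nat.lt_succ_iff] using hj
        simp only [ite_smul, zero_smul]
        rw [← Finset.sum_filter]
        refine Finset.sum_nbij' (fun m => m + j) (fun t => t - j) ?_ ?_ ?_ ?_ ?_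
        · intro m hm
          simp only [Finset.mem_filter, Finset.mem_range] at hm ⊢
          omega
        · intro t ht
          simp only [Finset.mem_filter, Finset.mem_range] at ht ⊢
          omega
        · intro m hm; omega
        · intro t ht
          simp only [Finset.mem_filter, Finset.mem_range] at ht
          omega
        · intro m hm
          rw [show m+j-j = m from by omega]
      rw [Finset.sum_congr rfl inner, Finset.sum_comm]
      refine Finset.sum_congr rfl fun t _ => ?_
      rw [EE, Finset.sum_smul]
    rw [step2, Finset.range_eq_Ico,
        ← Finset.sum_Ico_consecutive _ (show 0 ≤ k+1 from by omega)
            (show k+1 ≤ k+r+1 from by omega),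
        ← Finset.range_eq_Ico]
    have part1 : ∑ t ∈ Finset.range (k+1), EE r k t • uu r k l t
        = Finsupp.single (![r+k, l] : Fin 2 → ℕ) (1:K) := by
      rw [Finset.sum_eq_single 0]
      · rw [EE_zero r k, one_smul]
        unfold uu
        rw [show r+k-0 = r+k from by omega, show l+0 = l from rfl]
      · intro t ht ht0
        have := Finset.mem_range.mp ht
        rw [EE_mid r k t hr1 (by omega) (by omega), zero_smul]
      · intro h; exact absurd (Finset.mem_range.mpr (by omega)) h
    have part2 : ∑ t ∈ Finset.Ico (k+1) (k+r+1), EE r k t • uu r k l t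
        = -∑ s ∈ Finset.Icc 1 r, (((-1:K)^(s-1) * qbinom ((s:ℤ)+(k:ℤ)-1) (s-1) *
            qbinom ((r:ℤ)+(k:ℤ)) (r-s)) •
            Finsupp.single (![r-s, l+s+k] : Fin 2 → ℕ) (1:K)) := by
      rw [← Finset.sum_neg_distrib]
      refine (Finset.sum_nbij' (fun s => k + s) (fun t => t - k) ?_ ?_ ?_ ?_ ?_).symm
      · intro s hs
        simp only [Finset.mem_Icc, Finset.mem_Ico] at hs ⊢
        omega
      · intro t ht
        simp only [Finset.mem_Icc, Finset.mem_Ico] at ht ⊢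
        omega
      · intro s hs; omega
      · intro t ht
        simp only [Finset.mem_Ico] at ht
        omega
      · intro s hs
        simp only [Finset.mem_Icc] at hs
        rw [EE_tail r hr k s hs.1 hs.2, neg_smul]
        unfold uu
        rw [show r+k-(k+s) = r-s from by omega, show l+(k+s) = l+s+k from by omega]
    rw [part1, part2, ← sub_eq_add_neg]
  rw [← key]
  refine Submodule.sum_mem _ fun m hm => Submodule.smul_mem _ _ (Submodule.subset_span ?_)
  refine ⟨![r+k-m, l+m], 0, h02, ?_, rfl⟩
  have hm' := Finset.mem_range.mp hm
  exact (show r ≤ r+k-m by omega)
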